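/- Let x_{i_r}⋯x_{i_s} be a word in simple reflections of a Coxeter group that is not reduced, and suppose deleting a single letter x_{i_u} with r ≤ u ≤ s yields a reduced word x_{i_r}⋯x̂_{i_u}⋯x_{i_s}. Then x_{i_u} belongs to some deletion pair within x_{i_r}⋯x_{i_s}: there exists a position v ≠ u such that the segment between positions min(u,v) and max(u,v) is not reduced but deleting either of these two endpoint letters from that segment yields a reduced word. -/

import Mathlib

variable {B W : Type*} [Group W] {M : CoxeterMatrix B}

/-- The segment of the word `ω` from position `a` to position `b` (inclusive). -/
def wordSegment (ω : List B) (a b : ℕ) : List B := (ω.drop a).take (b - a + 1)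

/-- Positions `a < b` form a deletion pair in the word `ω`: the segment from `a` to `b`
is not reduced, but deleting either endpoint of that segment yields a reduced word. -/
def IsDeletionPair (cs : CoxeterSystem M W) (ω : List B) (a b : ℕ) : Prop :=
  a < b ∧ b < ω.length ∧
  ¬ cs.IsReduced (wordSegment ω a b) ∧
  cs.IsReduced (wordSegment ω a b).tail ∧
  cs.IsReduced (wordSegment ω a b).dropLast

namespace DeletionAux

open CoxeterSystem List

variable [DecidableEq W] (cs : CoxeterSystem M W)

/-- The basic involution on `W × ℤˣ` attached to a simple reflection. -/
def g (i : B) : W × ℤˣ → W × ℤˣ :=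
  fun p => (cs.simple i * p.1 * cs.simple i, if p.1 = cs.simple i then -p.2 else p.2)

lemma g_invol (i : B) : Function.Involutive (g cs i) := by
  rintro ⟨w, ε⟩
  simp only [g]
  have hcond : cs.simple i * w * cs.simple i = cs.simple i ↔ w = cs.simple i := by
    constructor
    · intro h
      have := congrArg (fun z => cs.simple i * z * cs.simple i) h
      simpa [mul_assoc, cs.simple_mul_simple_self] using this
    · rintro rfl; simp [cs.simple_mul_simple_self]
  by_cases h : w = cs.simple i
  · subst h
    simp [cs.simple_mul_simple_self, mul_assoc]
  · simp only [hcond, h, if_neg]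
    ext
    · show cs.simple i * (cs.simple i * w * cs.simple i) * cs.simple i = w
      rw [← mul_assoc, ← mul_assoc, cs.simple_mul_simple_self, one_mul, mul_assoc,
        cs.simple_mul_simple_self, mul_one]
    · simp

/-- The permutation of `W × ℤˣ` attached to a simple reflection. -/
def f (i : B) : Equiv.Perm (W × ℤˣ) := (g_invol cs i).toPerm

lemma f_apply (i : B) (p : W × ℤˣ) : f cs i p = g cs i p := rfl

/-- The sign of `w` relative to the word `χ`: `-1` to the number of occurrences of `w`
in the right inversion sequence of `χ`. -/
def sgn (w : W) (χ : List B) : ℤˣ :=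
  ((cs.rightInvSeq χ).map (fun r => if r = w then (-1 : ℤˣ) else 1)).prod

lemma sgn_nil (w : W) : sgn cs w [] = 1 := rfl

lemma sgn_cons (w : W) (c : B) (χ : List B) :
    sgn cs w (c :: χ) =
      (if (cs.wordProd χ)⁻¹ * cs.simple c * cs.wordProd χ = w then (-1 : ℤˣ) else 1)
        * sgn cs w χ := by
  simp [sgn, rightInvSeq]

lemma prod_f_apply (w : W) (ε : ℤˣ) (χ : List B) :
    ((χ.map (f cs)).prod) (w, ε) =
      (cs.wordProd χ * w * (cs.wordProd χ)⁻¹, ε * sgn cs w χ) := by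
  induction χ with
  | nil => simp [sgn_nil, cs.wordProd_nil]
  | cons c χ ih =>
    rw [map_cons, prod_cons, Equiv.Perm.mul_apply, ih, f_apply]
    have hcond : cs.wordProd χ * w * (cs.wordProd χ)⁻¹ = cs.simple c ↔
        (cs.wordProd χ)⁻¹ * cs.simple c * cs.wordProd χ = w := by
      constructor
      · rintro h
        rw [← h]; group
      · rintro rfl; group
    simp only [g]
    rw [sgn_cons]
    congr 1
    · rw [cs.wordProd_cons, mul_inv_rev, cs.inv_simple]
      group
    · simp only [hcond]
      by_cases h : (cs.wordProd χ)⁻¹ * cs.simple c * cs.wordProd χ = w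
      · simp only [h, if_pos]
        rw [neg_one_mul, mul_neg]
      · simp [h]

/-- The right inversion sequence of an alternating word, computed explicitly. -/
lemma ris_alternatingWord (i j : B) (n : ℕ) :
    cs.rightInvSeq (CoxeterSystem.alternatingWord i j n) =
      (List.range n).map
        (fun k => ((cs.simple i * cs.simple j)⁻¹) ^ (n - 1 - k) * cs.simple j) := by
  have key : ∀ m : ℕ,
      (cs.wordProd (CoxeterSystem.alternatingWord i j m))⁻¹
        * cs.simple (if Even m then j else i)
        * cs.wordProd (CoxeterSystem.alternatingWord i j m)
      = ((cs.simple i * cs.simple j)⁻¹) ^ m * cs.simple j := by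
    intro m
    set σ := cs.simple i * cs.simple j with hσ
    have hsemi : ∀ a : ℕ, cs.simple j * σ ^ a = (σ⁻¹) ^ a * cs.simple j := by
      intro a
      have hbase : cs.simple j * σ = σ⁻¹ * cs.simple j := by
        rw [hσ, mul_inv_rev, cs.inv_simple, cs.inv_simple]
        group
      induction a with
      | zero => simp
      | succ a iha =>
        rw [pow_succ, ← mul_assoc, iha, mul_assoc, hbase, pow_succ]
        group
    rw [cs.prod_alternatingWord_eq_mul_pow]
    rcases Nat.even_or_odd m with hm | hm
    · obtain ⟨c, hc⟩ := hm
      have h3 : m / 2 = c := by omega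
      rw [if_pos ⟨c, hc⟩, if_pos ⟨c, hc⟩, one_mul, h3]
      calc (σ ^ c)⁻¹ * cs.simple j * σ ^ c
          = (σ⁻¹) ^ c * (cs.simple j * σ ^ c) := by
            rw [inv_pow, mul_assoc]
        _ = (σ⁻¹) ^ c * ((σ⁻¹) ^ c * cs.simple j) := by rw [hsemi]
        _ = (σ⁻¹) ^ m * cs.simple j := by
            rw [← mul_assoc, ← pow_add]
            congr 2
            omega
    · obtain ⟨c, hc⟩ := hm
      have hme : ¬ Even m := by
        rw [Nat.not_even_iff_odd]
        exact ⟨c, hc⟩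
      have h3 : m / 2 = c := by omega
      rw [if_neg hme, if_neg hme, h3]
      calc (cs.simple j * σ ^ c)⁻¹ * cs.simple i * (cs.simple j * σ ^ c)
          = (σ⁻¹) ^ c * (cs.simple j * (cs.simple i * cs.simple j) * σ ^ c) := by
            rw [mul_inv_rev, cs.inv_simple, inv_pow]
            group
        _ = (σ⁻¹) ^ c * (cs.simple j * σ ^ (c + 1)) := by
            rw [← hσ, pow_succ']
            group
        _ = (σ⁻¹) ^ c * ((σ⁻¹) ^ (c + 1) * cs.simple j) := by rw [hsemi]
        _ = (σ⁻¹) ^ m * cs.simple j := by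
            rw [← mul_assoc, ← pow_add]
            congr 2
            omega
  induction n with
  | zero => simp [CoxeterSystem.alternatingWord]
  | succ n ih =>
    rw [CoxeterSystem.alternatingWord_succ' i j n]
    show cs.rightInvSeq (_ :: _) = _
    rw [rightInvSeq, ih, List.range_succ_eq_map, map_cons, map_map]
    congr 1
    · simpa using key n
    · apply List.map_congr_left
      intro k _
      simp only [Function.comp_apply]
      congr 2
      omega

lemma sgn_braidWord (w : W) (i j : B) :
    sgn cs w (CoxeterSystem.alternatingWord i j (2 * M i j)) = 1 := by
  set m := M i j with hm
  set σ := cs.simple i * cs.simple j with hσ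
  have hσm : (σ⁻¹) ^ m = 1 := by
    rw [inv_pow, hσ, hm, cs.simple_mul_simple_pow, inv_one]
  unfold sgn
  rw [ris_alternatingWord, List.map_map, two_mul, List.range_add, List.map_append,
    List.prod_append]
  have hcongr : List.map ((fun r => if r = w then (-1 : ℤˣ) else 1) ∘
        fun k => (σ⁻¹) ^ (m + m - 1 - k) * cs.simple j) (List.range m)
      = List.map (((fun r => if r = w then (-1 : ℤˣ) else 1) ∘
        fun k => (σ⁻¹) ^ (m + m - 1 - k) * cs.simple j) ∘ fun k => m + k) (List.range m) := by
    apply List.map_congr_left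
    intro k hk
    rw [List.mem_range] at hk
    simp only [Function.comp_apply]
    congr 2
    have h1 : m + m - 1 - k = m + (m - 1 - k) := by omega
    have h2 : m + m - 1 - (m + k) = m - 1 - k := by omega
    rw [h1, h2, pow_add, hσm, one_mul]
  rw [List.map_map] at *
  rw [hcongr]
  exact Int.units_mul_self _

lemma isLiftable_f : M.IsLiftable (f cs) := by
  intro i j
  have hword : ∀ m : ℕ,
      ((CoxeterSystem.alternatingWord i j (2 * m)).map (f cs)).prod = (f cs i * f cs j) ^ m := by
    intro m
    induction m with
    | zero => simp [CoxeterSystem.alternatingWord]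
    | succ m ih =>
      have h1 : 2 * (m + 1) = (2 * m + 1) + 1 := by ring
      rw [h1, CoxeterSystem.alternatingWord_succ' i j, CoxeterSystem.alternatingWord_succ' i j]
      have he : ¬ Even (2 * m + 1) := by simp [parity_simps]
      have he2 : Even (2 * m) := even_two_mul m
      rw [if_neg he, if_pos he2, map_cons, map_cons, prod_cons, prod_cons, ih, pow_succ']
      rw [mul_assoc]
  ext1 p
  obtain ⟨w, ε⟩ := p
  rw [← hword (M i j), prod_f_apply]
  have hprod : cs.wordProd (CoxeterSystem.alternatingWord i j (2 * M i j)) = 1 := by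
    rw [cs.prod_alternatingWord_eq_mul_pow]
    have : Even (2 * M i j) := even_two_mul _
    rw [if_pos this]
    have : 2 * M i j / 2 = M i j := by omega
    rw [this, one_mul, cs.simple_mul_simple_pow]
  rw [hprod, sgn_braidWord]
  simp

/-- The sign homomorphism, showing `sgn` only depends on the product of the word. -/
noncomputable def eta : W →* Equiv.Perm (W × ℤˣ) := cs.lift ⟨f cs, isLiftable_f cs⟩

lemma eta_wordProd (χ : List B) : eta cs (cs.wordProd χ) = (χ.map (f cs)).prod := by
  induction χ with
  | nil => simp [cs.wordProd_nil]
  | cons c χ ih =>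
    rw [cs.wordProd_cons, map_mul, ih, map_cons, prod_cons]
    congr 1
    exact cs.lift_apply_simple (isLiftable_f cs) c

lemma sgn_invariant {χ₁ χ₂ : List B} (h : cs.wordProd χ₁ = cs.wordProd χ₂) (w : W) :
    sgn cs w χ₁ = sgn cs w χ₂ := by
  have h1 : ((χ₁.map (f cs)).prod) (w, 1) = ((χ₂.map (f cs)).prod) (w, 1) := by
    rw [← eta_wordProd, ← eta_wordProd, h]
  rw [prod_f_apply, prod_f_apply] at h1
  have := congrArg Prod.snd h1
  simpa using this

lemma mem_of_map_ite_prod_ne_one {w : W} {l : List W}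
    (h : (l.map (fun r => if r = w then (-1 : ℤˣ) else 1)).prod ≠ 1) : w ∈ l := by
  induction l with
  | nil => simp at h
  | cons r l ih =>
    by_cases hr : r = w
    · subst hr; exact List.mem_cons_self
    · rw [map_cons, prod_cons, if_neg hr, one_mul] at h
      exact List.mem_cons_of_mem r (ih h)

/-- The product of a segment in terms of suffix products. -/
lemma segment_prod (ω : List B) (x y : ℕ) :
    cs.wordProd ((ω.drop x).take y) = cs.wordProd (ω.drop x) * (cs.wordProd (ω.drop (x + y)))⁻¹ := by
  have h : (ω.drop x).take y ++ ω.drop (x + y) = ω.drop x := by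
    rw [show ω.drop (x + y) = (ω.drop x).drop y by rw [List.drop_drop, Nat.add_comm]]
    exact List.take_append_drop y (ω.drop x)
  have := congrArg cs.wordProd h
  rw [cs.wordProd_append] at this
  rw [← this]
  group

lemma getD_ris_mul (ω : List B) (k : ℕ) :
    cs.wordProd (ω.drop k) * (cs.rightInvSeq ω).getD k 1 = cs.wordProd (ω.drop (k + 1)) := by
  have h1 : (cs.rightInvSeq ω).getD k 1 = (cs.rightInvSeq (ω.drop k)).getD 0 1 := by
    rw [cs.rightInvSeq_drop, List.getD_eq_getElem?_getD, List.getD_eq_getElem?_getD,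
      List.getElem?_drop, Nat.add_zero]
  rw [h1]
  have h2 := cs.wordProd_mul_getD_rightInvSeq (ω.drop k) 0
  rw [h2]
  congr 1
  rw [List.eraseIdx_zero, List.tail_drop]

/-- From a duplicate pair in the right inversion sequence, construct a deletion pair,
provided one of the two relevant subwords is already known reduced. -/
lemma pair_of_dup (ω : List B) (a b : ℕ) (hab : a < b) (hb : b < ω.length)
    (hdup : (cs.rightInvSeq ω).getD a 1 = (cs.rightInvSeq ω).getD b 1)
    (hside : cs.IsReduced ((ω.drop (a + 1)).take (b - a))
      ∨ cs.IsReduced ((ω.drop a).take (b - a))) :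
    IsDeletionPair cs ω a b := by
  set t := (cs.rightInvSeq ω).getD b 1 with hts
  have hda : cs.wordProd (ω.drop a) * t = cs.wordProd (ω.drop (a + 1)) := by
    have h := getD_ris_mul cs ω a
    rwa [hdup] at h
  have hdb : cs.wordProd (ω.drop b) * t = cs.wordProd (ω.drop (b + 1)) := getD_ris_mul cs ω b
  have htt : t * t = 1 := cs.getD_rightInvSeq_mul_self ω b
  have hti : t⁻¹ = t := inv_eq_of_mul_eq_one_right htt
  -- list identities
  have hlen_seg : (wordSegment ω a b).length = b - a + 1 := by
    simp only [wordSegment, List.length_take, List.length_drop]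
    omega
  have htail : (wordSegment ω a b).tail = (ω.drop (a + 1)).take (b - a) := by
    simp only [wordSegment]
    rw [← List.drop_one, List.drop_take, List.drop_drop,
      show b - a + 1 - 1 = b - a from by omega]
  have hdl : (wordSegment ω a b).dropLast = (ω.drop a).take (b - a) := by
    rw [List.dropLast_eq_take, hlen_seg]
    simp only [wordSegment]
    rw [List.take_take, show min (b - a + 1 - 1) (b - a + 1) = b - a from by omega]
  -- products
  have hPseg : cs.wordProd (wordSegment ω a b)
      = cs.wordProd (ω.drop a) * (cs.wordProd (ω.drop (b + 1)))⁻¹ := by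
    rw [wordSegment, segment_prod, show a + (b - a + 1) = b + 1 from by omega]
  have hPtail : cs.wordProd ((ω.drop (a + 1)).take (b - a))
      = cs.wordProd (ω.drop (a + 1)) * (cs.wordProd (ω.drop (b + 1)))⁻¹ := by
    rw [segment_prod, show a + 1 + (b - a) = b + 1 from by omega]
  have hPdl : cs.wordProd ((ω.drop a).take (b - a))
      = cs.wordProd (ω.drop a) * (cs.wordProd (ω.drop b))⁻¹ := by
    rw [segment_prod, show a + (b - a) = b from by omega]
  -- the two deleted words have the same product
  have hPeq : cs.wordProd ((ω.drop (a + 1)).take (b - a))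
      = cs.wordProd ((ω.drop a).take (b - a)) := by
    rw [hPtail, hPdl, ← hda, ← hdb]
    group
  -- the middle form of the segment product
  have hPmid : cs.wordProd (wordSegment ω a b)
      = cs.wordProd (ω.drop (a + 1)) * (cs.wordProd (ω.drop b))⁻¹ := by
    rw [hPseg, ← hda, ← hdb, mul_inv_rev, hti, ← mul_assoc]
  have hmidword : cs.wordProd (ω.drop (a + 1)) * (cs.wordProd (ω.drop b))⁻¹
      = cs.wordProd ((ω.drop (a + 1)).take (b - (a + 1))) := by
    rw [segment_prod, show a + 1 + (b - (a + 1)) = b from by omega]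
  -- lengths of the two deleted words
  have hlen_tail : ((ω.drop (a + 1)).take (b - a)).length = b - a := by
    simp only [List.length_take, List.length_drop]
    omega
  have hlen_dl : ((ω.drop a).take (b - a)).length = b - a := by
    simp only [List.length_take, List.length_drop]
    omega
  -- both deleted words are reduced
  have hred2 : cs.IsReduced ((ω.drop (a + 1)).take (b - a))
      ∧ cs.IsReduced ((ω.drop a).take (b - a)) := by
    unfold CoxeterSystem.IsReduced at *
    rcases hside with h | h
    · exact ⟨h, by rw [← hPeq, hlen_dl, h, hlen_tail]⟩
    · exact ⟨by rw [hPeq, hlen_tail, h, hlen_dl], h⟩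
  -- the segment is not reduced
  have hnotred : ¬ cs.IsReduced (wordSegment ω a b) := by
    intro hcon
    have h1 : cs.length (cs.wordProd (wordSegment ω a b)) = b - a + 1 := by
      rw [hcon, hlen_seg]
    have h2 : cs.length (cs.wordProd (wordSegment ω a b)) ≤ b - (a + 1) := by
      rw [hPmid, hmidword]
      calc cs.length (cs.wordProd ((ω.drop (a + 1)).take (b - (a + 1))))
          ≤ ((ω.drop (a + 1)).take (b - (a + 1))).length := cs.length_wordProd_le _
        _ ≤ b - (a + 1) := by simp [List.length_take]
    omega
  refine ⟨hab, hb, hnotred, ?_, ?_⟩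
  · rw [htail]; exact hred2.1
  · rw [hdl]; exact hred2.2

end DeletionAux

/-- If a word `ω` is not reduced but deleting the single letter at
position `u` yields a reduced word, then the letter at position `u` belongs to a deletion
pair of `ω`: there is a position `v ≠ u` such that the segment between `min u v` and
`max u v` is not reduced while deleting either endpoint of that segment gives a reduced
word. -/
theorem mem_deletionPair (cs : CoxeterSystem M W) (ω : List B) (u : ℕ)
    (hu : u < ω.length)
    (hnred : ¬ cs.IsReduced ω)
    (hred : cs.IsReduced (ω.eraseIdx u)) :
    ∃ v < ω.length, v ≠ u ∧ IsDeletionPair cs ω (min u v) (max u v) := by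
  classical
  open DeletionAux List CoxeterSystem in
  set n := ω.length with hn
  set t' := (cs.rightInvSeq ω).getD u 1 with ht'
  have hrislen : (cs.rightInvSeq ω).length = n := cs.length_rightInvSeq ω
  have hu' : u < (cs.rightInvSeq ω).length := by omega
  have ht'mem : t' ∈ cs.rightInvSeq ω := by
    rw [ht', List.getD_eq_getElem _ 1 hu']
    exact List.getElem_mem _
  have ht'refl : cs.IsReflection t' := cs.isReflection_of_mem_rightInvSeq ω ht'mem
  have h1 : cs.wordProd ω * t' = cs.wordProd (ω.eraseIdx u) :=
    cs.wordProd_mul_getD_rightInvSeq ω u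
  have hlen_erase : cs.length (cs.wordProd (ω.eraseIdx u)) = n - 1 := by
    rw [hred]
    rw [List.length_eraseIdx]
    simp [← hn, hu]
  -- the length of π ω is at most n - 2
  have hlω : cs.length (cs.wordProd ω) + 1 < n := by
    have hle : cs.length (cs.wordProd ω) ≤ n := cs.length_wordProd_le ω
    have hne : cs.length (cs.wordProd ω) ≠ n := hnred
    have hω' : cs.wordProd ω = cs.wordProd (ω.eraseIdx u) * t' := by
      rw [← h1, mul_assoc, ht'refl.mul_self, mul_one]
    have hpar : cs.length (cs.wordProd ω) % 2
        = (cs.length (cs.wordProd (ω.eraseIdx u)) + cs.length t') % 2 := by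
      rw [hω']
      exact cs.length_mul_mod_two _ _
    have hodd : cs.length t' % 2 = 1 := Nat.odd_iff.mp ht'refl.odd_length
    rw [hlen_erase] at hpar
    omega
  -- t' is not a right inversion of π ω
  have hnotinv : ¬ cs.IsRightInversion (cs.wordProd ω) t' := by
    rintro ⟨-, hlt2⟩
    rw [h1, hlen_erase] at hlt2
    omega
  -- the sign of t' in ω equals its sign in a reduced word, which is 1
  obtain ⟨ρ, hρred, hρ⟩ := cs.exists_reduced_word' (cs.wordProd ω)
  have hnotmem : t' ∉ cs.rightInvSeq ρ := by
    intro hmem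
    exact hnotinv (hρ ▸ cs.isRightInversion_of_mem_rightInvSeq hρred hmem)
  have hsgnρ : DeletionAux.sgn cs t' ρ = 1 := by
    by_contra h
    exact hnotmem (DeletionAux.mem_of_map_ite_prod_ne_one h)
  have hsgnω : DeletionAux.sgn cs t' ω = 1 := by
    rw [DeletionAux.sgn_invariant cs hρ t', hsgnρ]
  -- decompose the right inversion sequence at position u
  have hdecomp : cs.rightInvSeq ω
      = (cs.rightInvSeq ω).take u ++ t' :: (cs.rightInvSeq ω).drop (u + 1) := by
    conv_lhs => rw [← List.take_append_drop u (cs.rightInvSeq ω)]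
    congr 1
    rw [List.drop_eq_getElem_cons hu']
    congr 1
    rw [ht', List.getD_eq_getElem _ 1 hu']
  -- find a second occurrence of t'
  have hmem2 : t' ∈ (cs.rightInvSeq ω).take u ∨ t' ∈ (cs.rightInvSeq ω).drop (u + 1) := by
    have := hsgnω
    unfold DeletionAux.sgn at this
    rw [hdecomp, List.map_append, List.prod_append, List.map_cons, List.prod_cons,
      if_pos rfl] at this
    by_contra hcon
    push_neg at hcon
    have e1 : (((cs.rightInvSeq ω).take u).map
        (fun r => if r = t' then (-1 : ℤˣ) else 1)).prod = 1 := by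
      by_contra h
      exact hcon.1 (DeletionAux.mem_of_map_ite_prod_ne_one h)
    have e2 : (((cs.rightInvSeq ω).drop (u + 1)).map
        (fun r => if r = t' then (-1 : ℤˣ) else 1)).prod = 1 := by
      by_contra h
      exact hcon.2 (DeletionAux.mem_of_map_ite_prod_ne_one h)
    rw [e1, e2] at this
    simp at this
  -- produce the index v
  obtain ⟨v, hvn, hvu, hvt⟩ : ∃ v < n, v ≠ u ∧ (cs.rightInvSeq ω).getD v 1 = t' := by
    rcases hmem2 with h | h
    · obtain ⟨k, hk, hkv⟩ := List.mem_iff_getElem.mp h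
      have hklt : k < u := by
        have := hk
        simp only [List.length_take] at this
        omega
      refine ⟨k, by omega, by omega, ?_⟩
      rw [List.getElem_take] at hkv
      rw [List.getD_eq_getElem _ 1 (by omega), hkv]
    · obtain ⟨k, hk, hkv⟩ := List.mem_iff_getElem.mp h
      have hklt : u + 1 + k < n := by
        have := hk
        simp only [List.length_drop] at this
        omega
      refine ⟨u + 1 + k, by omega, by omega, ?_⟩
      rw [List.getElem_drop] at hkv
      rw [List.getD_eq_getElem _ 1 (by omega)]
      exact hkv
  refine ⟨v, by omega, hvu, ?_⟩
  rcases lt_or_gt_of_ne hvu with hvlt | hvgt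
  · -- v < u : pair (v, u), dropLast avoids position u
    rw [min_eq_right (le_of_lt hvlt), max_eq_left (le_of_lt hvlt)]
    apply DeletionAux.pair_of_dup cs ω v u hvlt hu
    · rw [hvt]
    · right
      have hseg : (ω.drop v).take (u - v) = ((ω.eraseIdx u).drop v).take (u - v) := by
        have hlt : (ω.take u).length = u := by
          rw [List.length_take]; omega
        have hdv : ((ω.take u).drop v).length = u - v := by
          rw [List.length_drop, hlt]
        calc (ω.drop v).take (u - v)
            = (ω.take u).drop v := (List.drop_take (i := v) (j := u) (l := ω)).symm
          _ = ((ω.eraseIdx u).drop v).take (u - v) := by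
              rw [List.eraseIdx_eq_take_drop_succ, List.drop_append,
                List.take_append, hdv, Nat.sub_self, List.take_zero,
                List.append_nil, List.take_of_length_le (le_of_eq hdv)]
      rw [hseg]
      exact CoxeterSystem.IsReduced.take (CoxeterSystem.IsReduced.drop hred v) _
  · -- u < v : pair (u, v), tail avoids position u
    rw [min_eq_left (le_of_lt hvgt), max_eq_right (le_of_lt hvgt)]
    apply DeletionAux.pair_of_dup cs ω u v hvgt (by omega)
    · rw [hvt]
    · left
      have hseg : ω.drop (u + 1) = (ω.eraseIdx u).drop u := by
        rw [List.eraseIdx_eq_take_drop_succ]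
        have hlt : (ω.take u).length = u := by rw [List.length_take]; omega
        have h := List.drop_left (l₁ := ω.take u) (l₂ := ω.drop (u + 1))
        rw [hlt] at h
        exact h.symm
      rw [hseg]
      exact CoxeterSystem.IsReduced.take (CoxeterSystem.IsReduced.drop hred u) _
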